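/- Let α_1, …, α_n : Finset Q be tolerable finsets whose syndromes are separated, i.e. H_{α_1 Δ ⋯ Δ α_n} equals the subgroup of (Finset Q, Δ) generated by H_{α_1} ∪ ⋯ ∪ H_{α_n}, and set α := α_1 Δ ⋯ Δ α_n. Then for any choice of z_i ∈ E_{α_i} (i = 1, …, n), the finset z_1 Δ ⋯ Δ z_n Δ (Δ_{1 ≤ i < j ≤ n} (α_i ∩ α_j)) belongs to E_α. (Lemma 3(ii).) -/

import Mathlib

open Finset
open scoped symmDiff Matrix

namespace CC

variable {Q : Type*} [Fintype Q] [DecidableEq Q]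

/-- A subgroup of the abelian group `(Finset Q, ∆)`. -/
def IsSubgroup (S : Set (Finset Q)) : Prop :=
  ∅ ∈ S ∧ ∀ a ∈ S, ∀ b ∈ S, a ∆ b ∈ S

/-- The subgroup of `(Finset Q, ∆)` generated by a set. -/
def closure (T : Set (Finset Q)) : Set (Finset Q) :=
  ⋂₀ {S : Set (Finset Q) | IsSubgroup S ∧ T ⊆ S}

/-- A CSS stabilizer code on the qubits `Q`. -/
structure CSS (Q : Type*) [Fintype Q] [DecidableEq Q] where
  SX : Set (Finset Q)
  SZ : Set (Finset Q)
  hSX : IsSubgroup SX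
  hSZ : IsSubgroup SZ
  comm : ∀ a ∈ SZ, ∀ b ∈ SX, 2 ∣ (a ∩ b).card

def ZX (C : CSS Q) : Set (Finset Q) := {γ | ∀ f ∈ C.SZ, 2 ∣ (γ ∩ f).card}

def ZZ (C : CSS Q) : Set (Finset Q) := {z | ∀ c ∈ C.SX, 2 ∣ (z ∩ c).card}

/-- Duality assumption. -/
def Dual (C : CSS Q) : Prop :=
  C.SZ = {z | ∀ γ ∈ ZX C, 2 ∣ (z ∩ γ).card} ∧
  C.SX = {c | ∀ z ∈ ZZ C, 2 ∣ (c ∩ z).card}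

def LogicalX (C : CSS Q) (l : Finset Q) : Prop := l ∈ ZX C ∧ l ∉ C.SX

def LogicalZ (C : CSS Q) (l : Finset Q) : Prop := l ∈ ZZ C ∧ l ∉ C.SZ

/-- Single-logical-qubit assumption. -/
def SingleQubit (C : CSS Q) : Prop :=
  (ZX C ≠ C.SX ∧ ∀ l l', LogicalX C l → LogicalX C l' → l ∆ l' ∈ C.SX) ∧
  (ZZ C ≠ C.SZ ∧ ∀ l l', LogicalZ C l → LogicalZ C l' → l ∆ l' ∈ C.SZ)

/-- Intersection axiom. -/
def Inter (C : CSS Q) : Prop :=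
  ZZ C = {x | ∃ α ∈ ZX C, ∃ β ∈ ZX C, x = α ∩ β}

def G (C : CSS Q) (α : Finset Q) : Set (Finset Q) :=
  closure (C.SZ ∪ {x | ∃ β ∈ ZX C, x = α ∩ β})

def H (C : CSS Q) (α : Finset Q) : Set (Finset Q) :=
  closure (C.SZ ∪ {x | ∃ β ∈ C.SX, x = α ∩ β})

def Zof (K : Set (Finset Q)) : Set (Finset Q) := {γ | ∀ h ∈ K, 2 ∣ (γ ∩ h).card}

def Tolerable (C : CSS Q) (α : Finset Q) : Prop := ∀ z ∈ G C α, ¬ LogicalZ C z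

def g (b : Q → ℤ) (s : Finset Q) : ℤ := ∑ q ∈ s, b q

/-- T-invariance assumption. -/
def TInv (C : CSS Q) (b : Q → ℤ) : Prop :=
  (∀ β ∈ C.SX, (8 : ℤ) ∣ g b β) ∧
  (∀ β ∈ C.SX, ∀ γ ∈ ZX C, (8 : ℤ) ∣ (g b β - 2 * g b (γ ∩ β)))

def E (C : CSS Q) (b : Q → ℤ) (α : Finset Q) : Set (Finset Q) :=
  {z | ∀ γ ∈ Zof (G C α), g b (γ ∩ α) ≡ 2 * ((z ∩ γ).card : ℤ) [ZMOD 4]}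

/- Quantum setting -/

abbrev M (Q : Type*) [Fintype Q] [DecidableEq Q] :=
  Matrix (Q → ZMod 2) (Q → ZMod 2) ℂ

def supp (v : Q → ZMod 2) : Finset Q := Finset.univ.filter (fun q => v q = 1)

def ind (α : Finset Q) : Q → ZMod 2 := fun q => if q ∈ α then 1 else 0

def XM (α : Finset Q) : M Q :=
  Matrix.of fun u v => if u = v + ind α then (1 : ℂ) else 0

noncomputable def ZM (α : Finset Q) : M Q :=
  Matrix.diagonal fun v => (-1 : ℂ) ^ (supp v ∩ α).card

noncomputable def AM (b : Q → ℤ) (α : Finset Q) : M Q :=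
  Matrix.diagonal fun v => Complex.I ^ (g b (α ∩ supp v))

noncomputable def UM (b : Q → ℤ) : M Q :=
  Matrix.diagonal fun v => Complex.exp (Real.pi * Complex.I / 4) ^ (g b (supp v))

def Encoded (C : CSS Q) (ρ : M Q) : Prop :=
  ρ.trace = 1 ∧
  (∀ c ∈ C.SX, XM c * ρ = ρ ∧ ρ * XM c = ρ) ∧
  (∀ f ∈ C.SZ, ZM f * ρ = ρ ∧ ρ * ZM f = ρ)

instance : Std.Commutative (α := Finset Q) (· ∆ ·) := ⟨symmDiff_comm⟩
instance : Std.Associative (α := Finset Q) (· ∆ ·) := ⟨symmDiff_assoc⟩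

/-- Iterated symmetric difference over a finite index set. -/
def bigΔ {ι : Type*} (s : Finset ι) (f : ι → Finset Q) : Finset Q :=
  s.fold (· ∆ ·) ∅ f

/-! ### Auxiliary lemmas -/

section Aux

lemma mem_closure_of_mem {T : Set (Finset Q)} {x : Finset Q} (hx : x ∈ T) : x ∈ closure T :=
  fun _S hS => hS.2 hx

lemma closure_isSubgroup (T : Set (Finset Q)) : IsSubgroup (closure T) := by
  constructor
  · intro S hS; exact hS.1.1
  · intro a ha b hb S hS; exact hS.1.2 a (ha S hS) b (hb S hS)

lemma closure_subset {T S : Set (Finset Q)} (hS : IsSubgroup S) (hTS : T ⊆ S) :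
    closure T ⊆ S :=
  Set.sInter_subset_of_mem ⟨hS, hTS⟩

lemma g_symmDiff (b : Q → ℤ) (u v : Finset Q) :
    g b (u ∆ v) + 2 * g b (u ∩ v) = g b u + g b v := by
  have h1 : g b (u ∩ v) + g b (u \ v) = g b u := Finset.sum_inter_add_sum_sdiff u v b
  have h2 : g b (v ∩ u) + g b (v \ u) = g b v := Finset.sum_inter_add_sum_sdiff v u b
  have h3 : g b (u ∆ v) = g b (u \ v) + g b (v \ u) := by
    rw [symmDiff_def, Finset.sup_eq_union]
    exact Finset.sum_union disjoint_sdiff_sdiff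
  have h4 : v ∩ u = u ∩ v := Finset.inter_comm v u
  rw [h4] at h2
  linarith

lemma card_symmDiff (u v : Finset Q) :
    ((u ∆ v).card : ℤ) + 2 * ((u ∩ v).card : ℤ) = (u.card : ℤ) + (v.card : ℤ) := by
  have := g_symmDiff (fun _ => (1 : ℤ)) u v
  simpa [g] using this

lemma g_card_parity (b : Q → ℤ) (hb : ∀ q, Odd (b q)) (u : Finset Q) :
    (2 : ℤ) ∣ g b u - (u.card : ℤ) := by
  have h : g b u - (u.card : ℤ) = ∑ q ∈ u, (b q - 1) := by
    rw [Finset.sum_sub_distrib]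
    simp [g]
  rw [h]
  refine Finset.dvd_sum fun q _ => ?_
  obtain ⟨k, hk⟩ := hb q
  omega

lemma inter_symmDiff_left (γ a b : Finset Q) : γ ∩ (a ∆ b) = (γ ∩ a) ∆ (γ ∩ b) :=
  inf_symmDiff_distrib_left γ a b

lemma inter_symmDiff_right (a b γ : Finset Q) : (a ∆ b) ∩ γ = (a ∩ γ) ∆ (b ∩ γ) :=
  inf_symmDiff_distrib_right a b γ

lemma even_inter_symmDiff {γ a b : Finset Q} (ha : 2 ∣ (γ ∩ a).card)
    (hb : 2 ∣ (γ ∩ b).card) : 2 ∣ (γ ∩ (a ∆ b)).card := by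
  rw [inter_symmDiff_left]
  have h := card_symmDiff (γ ∩ a) (γ ∩ b)
  omega

lemma isSubgroup_evens (γ : Finset Q) :
    IsSubgroup {h : Finset Q | 2 ∣ (γ ∩ h).card} := by
  constructor
  · simp
  · intro a ha b hb
    exact even_inter_symmDiff ha hb

lemma zof_closure {γ : Finset Q} {T : Set (Finset Q)}
    (h : ∀ t ∈ T, 2 ∣ (γ ∩ t).card) : ∀ h' ∈ closure T, 2 ∣ (γ ∩ h').card :=
  fun h' hh' => closure_subset (isSubgroup_evens γ) h hh'

lemma par2 (X Y γ : Finset Q) :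
    (2 : ℤ) ∣ (((X ∆ Y) ∩ γ).card : ℤ) - ((X ∩ γ).card : ℤ) - ((Y ∩ γ).card : ℤ) := by
  rw [inter_symmDiff_right]
  have h := card_symmDiff (X ∩ γ) (Y ∩ γ)
  omega

/-! ### bigΔ lemmas -/

lemma bigΔ_empty {ι : Type*} (f : ι → Finset Q) : bigΔ (∅ : Finset ι) f = ∅ := rfl

lemma bigΔ_insert {ι : Type*} [DecidableEq ι] {a : ι} {s : Finset ι} (ha : a ∉ s)
    (f : ι → Finset Q) : bigΔ (insert a s) f = f a ∆ bigΔ s f :=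
  Finset.fold_insert ha

lemma bigΔ_union {ι : Type*} [DecidableEq ι] {s t : Finset ι} (h : Disjoint s t)
    (f : ι → Finset Q) : bigΔ (s ∪ t) f = bigΔ s f ∆ bigΔ t f := by
  induction s using Finset.induction_on with
  | empty =>
      simp only [Finset.empty_union, bigΔ_empty]
      rw [← Finset.bot_eq_empty, bot_symmDiff]
  | @insert a s ha ih =>
      have hat : a ∉ t := Finset.disjoint_left.mp h (Finset.mem_insert_self a s)
      have hst : Disjoint s t := (Finset.disjoint_insert_left.mp h).2
      have ha' : a ∉ s ∪ t := by
        simp only [Finset.mem_union]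
        push_neg
        exact ⟨ha, hat⟩
      rw [Finset.insert_union, bigΔ_insert ha', bigΔ_insert ha, ih hst, symmDiff_assoc]

lemma bigΔ_map {ι κ : Type*} (e : ι ↪ κ) (s : Finset ι) (f : κ → Finset Q) :
    bigΔ (s.map e) f = bigΔ s (fun i => f (e i)) :=
  Finset.fold_map

lemma bigΔ_congr {ι : Type*} {s : Finset ι} {f h : ι → Finset Q}
    (H : ∀ i ∈ s, f i = h i) : bigΔ s f = bigΔ s h :=
  Finset.fold_congr H

lemma bigΔ_inter {ι : Type*} [DecidableEq ι] (x : Finset Q) (s : Finset ι)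
    (f : ι → Finset Q) : bigΔ s (fun i => x ∩ f i) = x ∩ bigΔ s f := by
  induction s using Finset.induction_on with
  | empty => simp [bigΔ_empty]
  | @insert a s ha ih =>
      rw [bigΔ_insert ha, bigΔ_insert ha, ih]
      exact (inter_symmDiff_left x (f a) (bigΔ s f)).symm

lemma bigΔ_pairs_insert {n : ℕ} (αs : Fin n → Finset Q) {a : Fin n} {s : Finset (Fin n)}
    (ha : a ∉ s) :
    bigΔ (((insert a s) ×ˢ (insert a s)).filter fun p => p.1 < p.2)
        (fun p => αs p.1 ∩ αs p.2)
      = (αs a ∩ bigΔ s αs) ∆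
          bigΔ ((s ×ˢ s).filter fun p => p.1 < p.2) (fun p => αs p.1 ∩ αs p.2) := by
  classical
  set t₁ : Finset (Fin n) := s.filter (fun j => a < j) with ht₁
  set t₂ : Finset (Fin n) := s.filter (fun j => j < a) with ht₂
  set e₁ : Fin n ↪ Fin n × Fin n := ⟨fun j => (a, j), fun x y h => by simpa using h⟩ with he₁
  set e₂ : Fin n ↪ Fin n × Fin n := ⟨fun j => (j, a), fun x y h => by simpa using h⟩ with he₂
  have hset : ((insert a s) ×ˢ (insert a s)).filter (fun p => p.1 < p.2)
      = (t₁.map e₁ ∪ t₂.map e₂) ∪ ((s ×ˢ s).filter fun p => p.1 < p.2) := by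
    ext ⟨i, j⟩
    simp only [Finset.mem_filter, Finset.mem_product, Finset.mem_insert, Finset.mem_union,
      Finset.mem_map, Function.Embedding.coeFn_mk, Prod.mk.injEq, ht₁, ht₂, he₁, he₂]
    constructor
    · rintro ⟨⟨hi | hi, hj | hj⟩, hij⟩
      · exact absurd hij (by rw [hi, hj]; exact lt_irrefl a)
      · exact Or.inl (Or.inl ⟨j, ⟨hj, hi ▸ hij⟩, Prod.ext hi.symm rfl⟩)
      · exact Or.inl (Or.inr ⟨i, ⟨hi, hj ▸ hij⟩, Prod.ext rfl hj.symm⟩)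
      · exact Or.inr ⟨⟨hi, hj⟩, hij⟩
    · rintro ((⟨j', ⟨hj', haj'⟩, hai, hj'j⟩ | ⟨i', ⟨hi', hi'a⟩, hi'i, haj⟩) | ⟨⟨hi, hj⟩, hij⟩)
      · exact ⟨⟨Or.inl rfl, Or.inr hj'⟩, haj'⟩
      · exact ⟨⟨Or.inr hi', Or.inl rfl⟩, hi'a⟩
      · exact ⟨⟨Or.inr hi, Or.inr hj⟩, hij⟩
  have d₁ : Disjoint (t₁.map e₁) (t₂.map e₂) := by
    rw [Finset.disjoint_left]
    rintro p hp₁ hp₂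
    simp only [Finset.mem_map, Function.Embedding.coeFn_mk, ht₁, ht₂, he₁, he₂,
      Finset.mem_filter] at hp₁ hp₂
    obtain ⟨j', ⟨_, hj'⟩, rfl⟩ := hp₁
    obtain ⟨i', ⟨hi's, _⟩, hpe⟩ := hp₂
    have : i' = a := congrArg Prod.fst hpe
    exact ha (this ▸ hi's)
  have d₂ : Disjoint (t₁.map e₁ ∪ t₂.map e₂) ((s ×ˢ s).filter fun p => p.1 < p.2) := by
    rw [Finset.disjoint_left]
    rintro p hp₁ hp₂
    simp only [Finset.mem_map, Function.Embedding.coeFn_mk, ht₁, ht₂, he₁, he₂,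
      Finset.mem_filter, Finset.mem_union, Finset.mem_product] at hp₁ hp₂
    rcases hp₁ with ⟨j', _, rfl⟩ | ⟨i', _, rfl⟩
    · exact ha hp₂.1.1
    · exact ha hp₂.1.2
  have hd₁₂ : Disjoint t₁ t₂ := by
    rw [Finset.disjoint_left]
    intro j hj₁ hj₂
    rw [ht₁, Finset.mem_filter] at hj₁
    rw [ht₂, Finset.mem_filter] at hj₂
    exact absurd hj₁.2 (not_lt_of_gt hj₂.2)
  have hts : t₁ ∪ t₂ = s := by
    ext j
    simp only [Finset.mem_union, ht₁, ht₂, Finset.mem_filter]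
    constructor
    · rintro (⟨h, _⟩ | ⟨h, _⟩) <;> exact h
    · intro hj
      have hne : j ≠ a := fun h => ha (h ▸ hj)
      rcases lt_or_gt_of_ne hne with h | h
      · exact Or.inr ⟨hj, h⟩
      · exact Or.inl ⟨hj, h⟩
  rw [hset, bigΔ_union d₂ _, bigΔ_union d₁ _, bigΔ_map, bigΔ_map]
  congr 1
  have h₂c : bigΔ t₂ (fun i => αs (e₂ i).1 ∩ αs (e₂ i).2)
      = bigΔ t₂ (fun j => αs a ∩ αs j) := by
    refine bigΔ_congr fun j _ => ?_
    simp only [he₂, Function.Embedding.coeFn_mk]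
    exact Finset.inter_comm _ _
  have h₁c : bigΔ t₁ (fun i => αs (e₁ i).1 ∩ αs (e₁ i).2)
      = bigΔ t₁ (fun j => αs a ∩ αs j) := by
    refine bigΔ_congr fun j _ => ?_
    simp only [he₁, Function.Embedding.coeFn_mk]
    rfl
  rw [h₁c, h₂c, ← bigΔ_union hd₁₂ _, hts, bigΔ_inter]

/-! ### Tolerability: the commutant of `G α` is contained in the commutant of each `G αᵢ` -/

lemma zof_each (C : CSS Q) {n : ℕ} (αs : Fin n → Finset Q)
    (htol : ∀ i, Tolerable C (αs i))
    (hsep : H C (bigΔ Finset.univ αs) = closure (⋃ i, H C (αs i)))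
    {γ : Finset Q} (hγ : γ ∈ Zof (G C (bigΔ Finset.univ αs))) (i : Fin n) :
    γ ∈ Zof (G C (αs i)) := by
  have hγ' : ∀ h ∈ G C (bigΔ Finset.univ αs), 2 ∣ (γ ∩ h).card := hγ
  have hSXZX : C.SX ⊆ ZX C := by
    intro c hc f hf
    have := C.comm f hf c hc
    rwa [Finset.inter_comm] at this
  have hHG : H C (bigΔ Finset.univ αs) ⊆ G C (bigΔ Finset.univ αs) := by
    refine closure_subset (closure_isSubgroup _) ?_
    rintro x (hx | ⟨β, hβ, rfl⟩)
    · exact mem_closure_of_mem (Or.inl hx)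
    · exact mem_closure_of_mem (Or.inr ⟨β, hSXZX hβ, rfl⟩)
  have hHiH : H C (αs i) ⊆ G C (bigΔ Finset.univ αs) := by
    intro x hx
    refine hHG ?_
    rw [hsep]
    exact mem_closure_of_mem (Set.mem_iUnion.mpr ⟨i, hx⟩)
  have hγZX : γ ∈ ZX C := fun f hf => hγ' f (mem_closure_of_mem (Or.inl hf))
  have hZZ : αs i ∩ γ ∈ ZZ C := by
    intro c hc
    have h1 : αs i ∩ c ∈ H C (αs i) := mem_closure_of_mem (Or.inr ⟨c, hc, rfl⟩)
    have h2 := hγ' _ (hHiH h1)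
    have h3 : (αs i ∩ γ) ∩ c = γ ∩ (αs i ∩ c) := by
      ext q
      simp only [Finset.mem_inter]
      tauto
    rw [h3]
    exact h2
  have hGi : αs i ∩ γ ∈ G C (αs i) := mem_closure_of_mem (Or.inr ⟨γ, hγZX, rfl⟩)
  have hSZ : αs i ∩ γ ∈ C.SZ := by
    by_contra hns
    exact htol i _ hGi ⟨hZZ, hns⟩
  intro h hh
  refine zof_closure ?_ h hh
  rintro t (ht | ⟨β, hβ, rfl⟩)
  · exact hγZX t ht
  · have h4 : γ ∩ (αs i ∩ β) = β ∩ (αs i ∩ γ) := by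
      ext q
      simp only [Finset.mem_inter]
      tauto
    rw [h4]
    exact hβ (αs i ∩ γ) hSZ

/-! ### The mod-4 arithmetic, by induction on the index set -/

lemma key_ind (b : Q → ℤ) (hb : ∀ q, Odd (b q)) {n : ℕ} (αs zs : Fin n → Finset Q)
    (γ : Finset Q)
    (H1 : ∀ i, (4 : ℤ) ∣ g b (γ ∩ αs i) - 2 * ((zs i ∩ γ).card : ℤ))
    (s : Finset (Fin n)) :
    (4 : ℤ) ∣ g b (γ ∩ bigΔ s αs) -
      2 * (((bigΔ s zs ∆
        bigΔ ((s ×ˢ s).filter fun p : Fin n × Fin n => p.1 < p.2)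
          (fun p => αs p.1 ∩ αs p.2)) ∩ γ).card : ℤ) := by
  classical
  induction s using Finset.induction_on with
  | empty => simp [bigΔ_empty, g]
  | @insert a s ha ih =>
      set A := bigΔ s αs with hA
      set Z := bigΔ s zs with hZ
      set P := bigΔ ((s ×ˢ s).filter fun p : Fin n × Fin n => p.1 < p.2)
        (fun p => αs p.1 ∩ αs p.2) with hP
      have e1 : bigΔ (insert a s) αs = αs a ∆ A := bigΔ_insert ha αs
      have e2 : bigΔ (insert a s) zs = zs a ∆ Z := bigΔ_insert ha zs
      have e3 : bigΔ (((insert a s) ×ˢ (insert a s)).filter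
            fun p : Fin n × Fin n => p.1 < p.2) (fun p => αs p.1 ∩ αs p.2)
          = (αs a ∩ A) ∆ P := bigΔ_pairs_insert αs ha
      rw [e1, e2, e3]
      -- expand g of the symmetric difference
      have hg1 : γ ∩ (αs a ∆ A) = (γ ∩ αs a) ∆ (γ ∩ A) := inter_symmDiff_left _ _ _
      have hg2 := g_symmDiff b (γ ∩ αs a) (γ ∩ A)
      -- parity bookkeeping for the card terms
      have p1 := par2 (zs a ∆ Z) ((αs a ∩ A) ∆ P) γ
      have p2 := par2 (zs a) Z γ
      have p3 := par2 (αs a ∩ A) P γ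
      have p4 := par2 Z P γ
      -- the middle intersection term
      have hu : (γ ∩ αs a) ∩ (γ ∩ A) = (αs a ∩ A) ∩ γ := by
        ext q
        simp only [Finset.mem_inter]
        tauto
      have p5 := g_card_parity b hb ((αs a ∩ A) ∩ γ)
      rw [← hg1, hu] at hg2
      have h1 := H1 a
      omega

end Aux

/-- Lemma 3(ii): factorization of the propagated-error coset over separated syndromes. -/
theorem E_factorization
    (C : CSS Q) (b : Q → ℤ) (hb : ∀ q, Odd (b q))
    (hdual : Dual C) (hsingle : SingleQubit C) (hinter : Inter C) (htinv : TInv C b)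
    (n : ℕ) (αs : Fin n → Finset Q) (htol : ∀ i, Tolerable C (αs i))
    (hsep : H C (bigΔ Finset.univ αs) = closure (⋃ i, H C (αs i)))
    (zs : Fin n → Finset Q) (hz : ∀ i, zs i ∈ E C b (αs i)) :
    bigΔ Finset.univ zs ∆
        bigΔ (Finset.univ.filter fun p : Fin n × Fin n => p.1 < p.2)
          (fun p => αs p.1 ∩ αs p.2)
      ∈ E C b (bigΔ Finset.univ αs) := by
  intro γ hγ
  have hγi : ∀ i, γ ∈ Zof (G C (αs i)) := fun i => zof_each C αs htol hsep hγ i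
  have H1 : ∀ i, (4 : ℤ) ∣ g b (γ ∩ αs i) - 2 * ((zs i ∩ γ).card : ℤ) := by
    intro i
    have h := hz i γ (hγi i)
    have h' := Int.ModEq.dvd h
    omega
  have key := key_ind b hb αs zs γ H1 Finset.univ
  rw [Finset.univ_product_univ] at key
  rw [Int.ModEq]
  omega

end CC
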